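/- (FKG inequality for monotone renewal) Assume the parameters (q_i)_{i≥0} are nondecreasing and let α_i ∈ [0,1] for all i. Then for every n ≥ 1, E[∏_{i=0}^{n−1} α_i^{ξ_{i+1}}] ≥ ∏_{i=0}^{n−1} E[α_i^{ξ_{i+1}}] = ∏_{i=0}^{n−1} (1 − P(ξ_{i+1}=1)(1 − α_i)). -/

import Mathlib

open MeasureTheory ProbabilityTheory Filter Set
open scoped ENNReal Classical

noncomputable section

namespace RenewalPerc

variable {Ω : Type*} [MeasurableSpace Ω]

/-- The undelayed renewal sequence `ξ` built from the inter-arrival times `T`: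
`ξ_i = 1` iff `i` is a renewal time, i.e. iff some partial sum of the
inter-arrival times equals `i`. -/
def xi (T : ℕ → Ω → ℕ∞) (i : ℕ) (ω : Ω) : ℕ :=
  if ∃ j : ℕ, (∑ l ∈ Finset.range j, T l ω) = (i : ℕ∞) then 1 else 0

/-- The expectation `E T` of the inter-arrival time, in `ℝ≥0∞`. -/
def ET (P : Measure Ω) (T : ℕ → Ω → ℕ∞) : ℝ≥0∞ :=
  ∫⁻ ω, (T 0 ω : ℝ≥0∞) ∂P

/-- `α_n = P(R ≤ n)`, as an extended nonnegative real. -/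
def alphaE (P : Measure Ω) (R : ℕ → Ω → ℕ) (n : ℕ) : ℝ≥0∞ :=
  P {ω | R 0 ω ≤ n}

/-- `α_n = P(R ≤ n)`, as a real number. -/
def alphaR (P : Measure Ω) (R : ℕ → Ω → ℕ) (n : ℕ) : ℝ :=
  (alphaE P R n).toReal

/-- `P(ξ_i = 1)`, as a real number. -/
def pxi (P : Measure Ω) (T : ℕ → Ω → ℕ∞) (i : ℕ) : ℝ :=
  (P {ω | xi T i ω = 1}).toReal

/-- The random interval `C_l = {l+1, …, l+R_l}` if `ξ_l = 1` (empty if `R_l = 0`),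
and `C_l = ∅` otherwise. -/
def cover (T : ℕ → Ω → ℕ∞) (R : ℕ → Ω → ℕ) (l : ℕ) (ω : Ω) : Set ℕ :=
  if xi T l ω = 1 then Set.Ioc l (l + R l ω) else ∅

/-- The connectivity relation `i ↔ j`. -/
def connects (T : ℕ → Ω → ℕ∞) (R : ℕ → Ω → ℕ) (i j : ℕ) (ω : Ω) : Prop :=
  xi T i ω = 1 ∧ xi T j ω = 1 ∧
    ∃ m n, m ≤ n ∧ n < j ∧ Set.Icc i j ⊆ ⋃ l ∈ Set.Icc m n, cover T R l ω

/-- The percolation event `A = ⋂_{i ≥ 1} ⋃_{j ≥ i} {0 ↔ j}`. -/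
def percSet (T : ℕ → Ω → ℕ∞) (R : ℕ → Ω → ℕ) : Set Ω :=
  ⋂ i ∈ {i : ℕ | 1 ≤ i}, ⋃ j ∈ {j : ℕ | i ≤ j}, {ω | connects T R 0 j ω}

/-- `B_n`: the sets of newly informed individuals of the dual (reverse firework)
process. -/
def Bset (T : ℕ → Ω → ℕ∞) (R : ℕ → Ω → ℕ) : ℕ → Ω → Set ℕ
  | 0 => fun _ => {0}
  | n + 1 => fun ω =>
      {i | xi T i ω = 1 ∧ (Set.Ico (i - R i ω) i ∩ Bset T R n ω).Nonempty ∧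
        ∀ m, m ≤ n → i ∉ Bset T R m ω}

/-- The dual process `Y`: `Y_i = 1` iff site `i` is eventually informed. -/
def Ydual (T : ℕ → Ω → ℕ∞) (R : ℕ → Ω → ℕ) (i : ℕ) (ω : Ω) : ℕ :=
  if ∃ n, i ∈ Bset T R n ω then 1 else 0

/-- The successive positions of the `1`'s of the dual process `Y`
(taking the value `∞` once there are no more `1`'s). -/
def renewalY (T : ℕ → Ω → ℕ∞) (R : ℕ → Ω → ℕ) : ℕ → Ω → ℕ∞
  | 0 => fun _ => 0
  | j + 1 => fun ω =>
      sInf {x : ℕ∞ | renewalY T R j ω < x ∧ ∃ i : ℕ, x = (i : ℕ∞) ∧ Ydual T R i ω = 1}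

/-- The gaps between successive `1`'s of the dual process `Y`. -/
def gapY (T : ℕ → Ω → ℕ∞) (R : ℕ → Ω → ℕ) (j : ℕ) (ω : Ω) : ℕ∞ :=
  renewalY T R (j + 1) ω - renewalY T R j ω

/-- `q_i^* = max_{n ≤ i} q_n`. -/
def qstar (q : ℕ → ℝ) (i : ℕ) : ℝ :=
  (Finset.range (i + 1)).sup' Finset.nonempty_range_add_one q

/-- `C_k = (∑_{j=1}^k ∏_{i=k}^{k+j-1} q_i^*)^2`. -/
def Cseq (q : ℕ → ℝ) (k : ℕ) : ℝ :=
  (∑ j ∈ Finset.Icc 1 k, ∏ i ∈ Finset.range j, qstar q (k + i)) ^ 2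

/-- The coupled house-of-cards chains, all driven by the same uniform
variables `U`, started at `n`. -/
def hoc (q : ℕ → ℝ) (U : ℕ → Ω → ℝ) (n : ℕ) : ℕ → Ω → ℕ
  | 0 => fun _ => n
  | l + 1 => fun ω => if U (l + 1) ω ≤ q (hoc q U n l ω) then hoc q U n l ω + 1 else 0

/-- The merging time `T_k = inf{l ≥ 1 : ζ^{(n)}_l = 0 for all n = 0,…,k}`. -/
def mergeT (q : ℕ → ℝ) (U : ℕ → Ω → ℝ) (k : ℕ) (ω : Ω) : ℕ∞ :=
  sInf {x : ℕ∞ | ∃ l : ℕ, x = (l : ℕ∞) ∧ 1 ≤ l ∧ ∀ n, n ≤ k → hoc q U n l ω = 0}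





/-- position of the last renewal of pattern `s` (with an implicit renewal at `0`) up to time `j` -/
def lst (s : Finset ℕ) (j : ℕ) : ℕ := WithBot.unbotD 0 ((s.filter (· ≤ j)).max)

/-- age at time `j` of the renewal pattern `s` -/
def age (s : Finset ℕ) (j : ℕ) : ℕ := j - lst s j

lemma lst_le (s : Finset ℕ) (j : ℕ) : lst s j ≤ j := by
  unfold lst
  rcases h : (s.filter (· ≤ j)).max with _ | m
  · exact Nat.zero_le j
  · have hm := Finset.mem_of_max h
    simp only [Finset.mem_filter] at hm
    exact hm.2

lemma lst_mem (s : Finset ℕ) (j : ℕ) : lst s j ∈ s ∨ lst s j = 0 := by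
  unfold lst
  rcases h : (s.filter (· ≤ j)).max with _ | m
  · right; rfl
  · left
    have hm := Finset.mem_of_max h
    simp only [Finset.mem_filter] at hm
    exact hm.1

lemma le_lst (s : Finset ℕ) {j y : ℕ} (hy : y ∈ s) (hyj : y ≤ j) : y ≤ lst s j := by
  unfold lst
  have : y ∈ s.filter (· ≤ j) := Finset.mem_filter.2 ⟨hy, hyj⟩
  have h := Finset.le_max this
  rcases hmax : (s.filter (· ≤ j)).max with _ | m
  · rw [hmax] at h; exact absurd h (WithBot.not_coe_le_bot y)
  · rw [hmax] at h
    have h' : (y : WithBot ℕ) ≤ (m : WithBot ℕ) := h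
    have : y ≤ m := WithBot.coe_le_coe.1 h'
    exact this

lemma lst_eq_of (s : Finset ℕ) {j y : ℕ} (hy : y ∈ s) (hyj : y ≤ j)
    (hmax : ∀ z ∈ s, z ≤ j → z ≤ y) : lst s j = y := by
  have h1 : y ≤ lst s j := le_lst s hy hyj
  have h2 : lst s j ≤ y := by
    rcases lst_mem s j with h | h
    · exact hmax _ h (lst_le s j)
    · omega
  omega

lemma lst_eq_zero_of (s : Finset ℕ) {j : ℕ} (h : ∀ z ∈ s, ¬ z ≤ j) : lst s j = 0 := by
  unfold lst
  have : s.filter (· ≤ j) = ∅ := Finset.filter_eq_empty_iff.2 (fun z hz hj => h z hz hj)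
  simp [this]

lemma age_of_mem {s : Finset ℕ} {j : ℕ} (hj : j ∈ s) : age s j = 0 := by
  have := le_lst s hj le_rfl
  unfold age; omega

lemma lst_congr {s s' : Finset ℕ} (j : ℕ) (h : ∀ y, y ≤ j → (y ∈ s ↔ y ∈ s')) :
    lst s j = lst s' j := by
  unfold lst
  have he : s.filter (· ≤ j) = s'.filter (· ≤ j) := by
    apply Finset.ext
    intro y
    simp only [Finset.mem_filter]
    constructor
    · rintro ⟨hy, hyj⟩; exact ⟨(h y hyj).1 hy, hyj⟩
    · rintro ⟨hy, hyj⟩; exact ⟨(h y hyj).2 hy, hyj⟩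
  rw [he]

lemma age_congr {s s' : Finset ℕ} (j : ℕ) (h : ∀ y, y ≤ j → (y ∈ s ↔ y ∈ s')) :
    age s j = age s' j := by
  unfold age; rw [lst_congr j h]

lemma lst_of_not_mem {s : Finset ℕ} {j : ℕ} (hj : j+1 ∉ s) : lst s (j+1) = lst s j := by
  unfold lst
  congr 1
  congr 1
  apply Finset.ext
  intro y
  simp only [Finset.mem_filter]
  constructor
  · rintro ⟨hy, hyj⟩
    refine ⟨hy, ?_⟩
    rcases Nat.lt_or_ge y (j+1) with h | h
    · omega
    · have : y = j + 1 := by omega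
      subst this; exact absurd hy hj
  · rintro ⟨hy, hyj⟩; exact ⟨hy, by omega⟩

lemma age_succ_of_not_mem {s : Finset ℕ} {j : ℕ} (hj : j+1 ∉ s) :
    age s (j+1) = age s j + 1 := by
  unfold age
  rw [lst_of_not_mem hj]
  have := lst_le s j
  omega

lemma age_pos_of_not_mem {s : Finset ℕ} {j : ℕ} (hj0 : j ≠ 0) (hj : j ∉ s) : age s j ≠ 0 := by
  unfold age
  have h1 := lst_le s j
  have h2 : lst s j ≠ j := by
    intro h
    rcases lst_mem s j with hm | hm
    · rw [h] at hm; exact hj hm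
    · omega
  omega

lemma age_empty (j : ℕ) : age ∅ j = j := by
  unfold age
  rw [lst_eq_zero_of ∅ (by simp)]
  omega


/-- the smallest element of `s` greater than `x` (junk value `0` if none) -/
def nxt (s : Finset ℕ) (x : ℕ) : ℕ :=
  if h : (s.filter (fun y => x < y)).Nonempty then (s.filter (fun y => x < y)).min' h else 0

/-- the `l`-th renewal position of the pattern `s` (with `nth s 0 = 0`) -/
def nth (s : Finset ℕ) : ℕ → ℕ
  | 0 => 0
  | l+1 => nxt s (nth s l)

lemma nxt_spec {s : Finset ℕ} {x : ℕ} (h : (s.filter (fun y => x < y)).Nonempty) :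
    nxt s x ∈ s ∧ x < nxt s x ∧ ∀ y ∈ s, x < y → nxt s x ≤ y := by
  unfold nxt
  rw [dif_pos h]
  have hm := Finset.min'_mem _ h
  simp only [Finset.mem_filter] at hm
  refine ⟨hm.1, hm.2, fun y hy hxy => ?_⟩
  exact Finset.min'_le _ _ (Finset.mem_filter.2 ⟨hy, hxy⟩)

/-- cardinality bookkeeping for `nth` -/
lemma nth_card {s : Finset ℕ} (h0 : 0 ∉ s) :
    ∀ l, l ≤ s.card → (s.filter (fun y => nth s l < y)).card = s.card - l := by
  intro l
  induction l with
  | zero =>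
    intro _
    have : s.filter (fun y => nth s 0 < y) = s := by
      apply Finset.filter_true_of_mem
      intro y hy
      show nth s 0 < y
      have : y ≠ 0 := fun h => h0 (h ▸ hy)
      show 0 < y
      omega
    rw [this]
    omega
  | succ l ih =>
    intro hl
    have hl' : l ≤ s.card := by omega
    have hcard := ih hl'
    have hne : (s.filter (fun y => nth s l < y)).Nonempty := by
      rw [← Finset.card_pos, hcard]; omega
    obtain ⟨hmem, hlt, hmin⟩ := nxt_spec hne
    have hh : nth s (l+1) = nxt s (nth s l) := rfl
    have hstep : s.filter (fun y => nth s (l+1) < y)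
        = (s.filter (fun y => nth s l < y)).erase (nth s (l+1)) := by
      apply Finset.ext
      intro y
      simp only [Finset.mem_filter, Finset.mem_erase]
      constructor
      · rintro ⟨hy, hgt⟩
        rw [hh] at hgt
        exact ⟨by rw [hh]; omega, hy, by omega⟩
      · rintro ⟨hne', hy, hgt⟩
        refine ⟨hy, ?_⟩
        have := hmin y hy hgt
        rw [hh] at hne' ⊢
        omega
    have hmem2 : nth s (l+1) ∈ s.filter (fun y => nth s l < y) := by
      rw [hh]; exact Finset.mem_filter.2 ⟨hmem, hlt⟩
    rw [hstep, Finset.card_erase_of_mem hmem2, hcard]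
    omega

lemma nth_succ_spec {s : Finset ℕ} (h0 : 0 ∉ s) {l : ℕ} (hl : l < s.card) :
    nth s (l+1) ∈ s ∧ nth s l < nth s (l+1) ∧ ∀ y ∈ s, nth s l < y → nth s (l+1) ≤ y := by
  have hcard := nth_card h0 l (by omega)
  have hne : (s.filter (fun y => nth s l < y)).Nonempty := by
    rw [← Finset.card_pos, hcard]; omega
  exact nxt_spec hne

lemma nth_top {s : Finset ℕ} (h0 : 0 ∉ s) : ∀ y ∈ s, y ≤ nth s s.card := by
  have hcard := nth_card h0 s.card le_rfl
  intro y hy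
  by_contra hlt
  have : y ∈ s.filter (fun y => nth s s.card < y) := Finset.mem_filter.2 ⟨hy, by omega⟩
  have := Finset.card_pos.2 ⟨y, this⟩
  omega

lemma nth_mono {s : Finset ℕ} (h0 : 0 ∉ s) {l l' : ℕ} (h : l ≤ l') (hl' : l' ≤ s.card) :
    nth s l ≤ nth s l' := by
  induction l' with
  | zero =>
    have : l = 0 := by omega
    rw [this]
  | succ m ih =>
    rcases Nat.lt_or_ge l (m+1) with hc | hc
    · have h1 : nth s l ≤ nth s m := ih (by omega) (by omega)
      have h2 := (nth_succ_spec h0 (by omega : m < s.card)).2.1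
      omega
    · have : l = m + 1 := by omega
      rw [this]

lemma nth_strict_mono {s : Finset ℕ} (h0 : 0 ∉ s) {l l' : ℕ} (h : l < l') (hl' : l' ≤ s.card) :
    nth s l < nth s l' := by
  have h1 : nth s l ≤ nth s (l'-1) := nth_mono h0 (by omega) (by omega)
  have h2 := (nth_succ_spec h0 (show l'-1 < s.card by omega)).2.1
  have : l' - 1 + 1 = l' := by omega
  rw [this] at h2
  omega

lemma nth_mem_iff {s : Finset ℕ} (h0 : 0 ∉ s) {y : ℕ} :
    y ∈ s ↔ ∃ l, l < s.card ∧ nth s (l+1) = y := by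
  constructor
  · intro hy
    by_contra hno
    push_neg at hno
    -- s = image of nth over range card, by card argument
    have himg : (Finset.range s.card).image (fun l => nth s (l+1)) ⊆ s := by
      intro z hz
      simp only [Finset.mem_image, Finset.mem_range] at hz
      obtain ⟨l, hl, rfl⟩ := hz
      exact (nth_succ_spec h0 hl).1
    have hinj : Set.InjOn (fun l => nth s (l+1)) (Finset.range s.card) := by
      intro a ha b hb hab
      simp only [Finset.coe_range, Set.mem_Iio] at ha hb
      by_contra hne
      rcases Nat.lt_or_ge a b with h | h
      · have := nth_strict_mono h0 (show a+1 < b+1 by omega) (by omega)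
        simp only at hab; omega
      · have hba : b < a := by omega
        have := nth_strict_mono h0 (show b+1 < a+1 by omega) (by omega)
        simp only at hab; omega
    have hcard : ((Finset.range s.card).image (fun l => nth s (l+1))).card = s.card := by
      rw [Finset.card_image_of_injOn hinj, Finset.card_range]
    have heq := Finset.eq_of_subset_of_card_le himg (by omega)
    rw [← heq] at hy
    simp only [Finset.mem_image, Finset.mem_range] at hy
    obtain ⟨l, hl, hval⟩ := hy
    exact hno l hl hval
  · rintro ⟨l, hl, rfl⟩
    exact (nth_succ_spec h0 hl).1

lemma nth_max {s : Finset ℕ} (h0 : 0 ∉ s) (hs : s.Nonempty) : nth s s.card ∈ s := by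
  have hcard : 1 ≤ s.card := Finset.card_pos.2 hs
  have : s.card - 1 + 1 = s.card := by omega
  have h := (nth_succ_spec h0 (show s.card - 1 < s.card by omega)).1
  rwa [this] at h

/-- `nth` of `s.erase (max)` agrees with `nth s` below the top -/
lemma nth_erase_max {s : Finset ℕ} (h0 : 0 ∉ s) (hs : s.Nonempty) :
    ∀ l, l ≤ s.card - 1 → nth (s.erase (nth s s.card)) l = nth s l := by
  set t := nth s s.card with ht
  intro l
  induction l with
  | zero => intro _; rfl
  | succ l ih =>
    intro hl
    have hcard : 1 ≤ s.card := Finset.card_pos.2 hs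
    have ihl := ih (by omega)
    show nxt (s.erase t) (nth (s.erase t) l) = nth s (l+1)
    rw [ihl]
    -- nth s (l+1) is in the erased set and is min of its filter
    have hspec := nth_succ_spec h0 (show l < s.card by omega)
    have hne_top : nth s (l+1) ≠ t := by
      have := nth_strict_mono h0 (show l+1 < s.card by omega) le_rfl
      omega
    have hfil : (s.erase t).filter (fun y => nth s l < y)
        = (s.filter (fun y => nth s l < y)).erase t := by
      apply Finset.ext; intro y
      simp only [Finset.mem_filter, Finset.mem_erase]
      tauto
    have hne' : ((s.erase t).filter (fun y => nth s l < y)).Nonempty := by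
      refine ⟨nth s (l+1), ?_⟩
      rw [hfil]
      exact Finset.mem_erase.2 ⟨hne_top, Finset.mem_filter.2 ⟨hspec.1, hspec.2.1⟩⟩
    obtain ⟨hmem', hlt', hmin'⟩ := nxt_spec hne'
    have h1 : nxt (s.erase t) (nth s l) ≤ nth s (l+1) := by
      apply hmin'
      · exact Finset.mem_erase.2 ⟨hne_top, hspec.1⟩
      · exact hspec.2.1
    have h2 : nth s (l+1) ≤ nxt (s.erase t) (nth s l) := by
      apply hspec.2.2
      · exact Finset.mem_of_mem_erase hmem'
      · exact hlt'
    omega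



def site (q : ℕ → ℝ) (s : Finset ℕ) (j : ℕ) : ℝ :=
  if j ∈ s then 1 - q (age s (j-1)) else q (age s (j-1))

def Wgt (q : ℕ → ℝ) (n : ℕ) (s : Finset ℕ) : ℝ := ∏ j ∈ Finset.Ioc 0 n, site q s j

def Sg (q : ℕ → ℝ) (n : ℕ) (h : ℕ → ℕ → ℝ) : ℝ :=
  ∑ s ∈ (Finset.Ioc 0 n).powerset, Wgt q n s * ∏ j ∈ Finset.range (n+1), h j (age s j)

lemma age_zero (s : Finset ℕ) : age s 0 = 0 := by unfold age; omega

lemma Ioc_zero_succ (n : ℕ) : Finset.Ioc 0 (n+1) = insert (n+1) (Finset.Ioc 0 n) := by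
  apply Finset.ext; intro y
  simp only [Finset.mem_Ioc, Finset.mem_insert]
  omega

lemma Sg_zero (q : ℕ → ℝ) (h : ℕ → ℕ → ℝ) : Sg q 0 h = h 0 0 := by
  unfold Sg Wgt
  simp [age_zero]

lemma site_congr_of_le {q : ℕ → ℝ} {s : Finset ℕ} {n : ℕ} (hs : s ⊆ Finset.Ioc 0 n)
    {j : ℕ} (hj : j ∈ Finset.Ioc 0 n) :
    site q (insert (n+1) s) j = site q s j := by
  have hj' : j ≤ n := (Finset.mem_Ioc.1 hj).2
  have hmem : (j ∈ insert (n+1) s) ↔ j ∈ s := by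
    simp only [Finset.mem_insert]
    constructor
    · rintro (h | h)
      · omega
      · exact h
    · exact Or.inr
  have hage : age (insert (n+1) s) (j-1) = age s (j-1) := by
    apply age_congr
    intro y hy
    simp only [Finset.mem_insert]
    constructor
    · rintro (h | h)
      · omega
      · exact h
    · exact Or.inr
  unfold site
  rw [hage]
  by_cases hjs : j ∈ s
  · rw [if_pos (hmem.2 hjs), if_pos hjs]
  · rw [if_neg (fun hh => hjs (hmem.1 hh)), if_neg hjs]

lemma age_insert_top {s : Finset ℕ} {n j : ℕ} (hj : j ≤ n) :
    age (insert (n+1) s) j = age s j := by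
  apply age_congr
  intro y hy
  simp only [Finset.mem_insert]
  constructor
  · rintro (h | h)
    · omega
    · exact h
  · exact Or.inr

lemma not_mem_top {s : Finset ℕ} {n : ℕ} (hs : s ⊆ Finset.Ioc 0 n) : n+1 ∉ s := by
  intro h
  have := (Finset.mem_Ioc.1 (hs h)).2
  omega

lemma Wgt_succ_not {q : ℕ → ℝ} {n : ℕ} {s : Finset ℕ} (hs : s ⊆ Finset.Ioc 0 n) :
    Wgt q (n+1) s = Wgt q n s * q (age s n) := by
  unfold Wgt
  rw [Ioc_zero_succ, Finset.prod_insert (by simp)]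
  have : site q s (n+1) = q (age s n) := by
    unfold site
    rw [if_neg (not_mem_top hs)]
    norm_num
  rw [this]; ring

lemma Wgt_succ_mem {q : ℕ → ℝ} {n : ℕ} {s : Finset ℕ} (hs : s ⊆ Finset.Ioc 0 n) :
    Wgt q (n+1) (insert (n+1) s) = Wgt q n s * (1 - q (age s n)) := by
  unfold Wgt
  rw [Ioc_zero_succ, Finset.prod_insert (by simp)]
  have h1 : site q (insert (n+1) s) (n+1) = 1 - q (age s n) := by
    unfold site
    rw [if_pos (Finset.mem_insert_self _ _)]
    have h2 : age (insert (n+1) s) n = age s n := age_insert_top le_rfl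
    rw [show ((n+1)-1 : ℕ) = n from rfl, h2]
  rw [h1, Finset.prod_congr rfl (fun j hj => site_congr_of_le hs hj)]
  ring

lemma prodh_succ_not {h : ℕ → ℕ → ℝ} {n : ℕ} {s : Finset ℕ} (hs : s ⊆ Finset.Ioc 0 n) :
    ∏ j ∈ Finset.range (n+2), h j (age s j)
      = (∏ j ∈ Finset.range (n+1), h j (age s j)) * h (n+1) (age s n + 1) := by
  rw [Finset.prod_range_succ, age_succ_of_not_mem (not_mem_top hs)]

lemma prodh_succ_mem {h : ℕ → ℕ → ℝ} {n : ℕ} {s : Finset ℕ} (hs : s ⊆ Finset.Ioc 0 n) :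
    ∏ j ∈ Finset.range (n+2), h j (age (insert (n+1) s) j)
      = (∏ j ∈ Finset.range (n+1), h j (age s j)) * h (n+1) 0 := by
  rw [Finset.prod_range_succ, age_of_mem (Finset.mem_insert_self _ _)]
  congr 1
  apply Finset.prod_congr rfl
  intro j hj
  rw [age_insert_top (by simp only [Finset.mem_range] at hj; omega)]

def updF (h : ℕ → ℕ → ℝ) (n : ℕ) (f : ℕ → ℝ) : ℕ → ℕ → ℝ := fun j => if j = n then f else h j

lemma Sg_succ (q : ℕ → ℝ) (n : ℕ) (h : ℕ → ℕ → ℝ) :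
    Sg q (n+1) h = Sg q n (updF h n
      (fun a => h n a * (q a * h (n+1) (a+1) + (1 - q a) * h (n+1) 0))) := by
  unfold Sg
  rw [Ioc_zero_succ, Finset.sum_powerset_insert (by simp)]
  rw [← Finset.sum_add_distrib]
  apply Finset.sum_congr rfl
  intro s hs
  rw [Finset.mem_powerset] at hs
  rw [Wgt_succ_not hs, Wgt_succ_mem hs, prodh_succ_not hs, prodh_succ_mem hs]
  have hr : ∀ (F : ℕ → ℝ), (∏ j ∈ Finset.range (n+1), updF h n F j (age s j))
      = (∏ j ∈ Finset.range n, h j (age s j)) * F (age s n) := by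
    intro F
    rw [Finset.prod_range_succ]
    have h1 : updF h n F n (age s n) = F (age s n) := by unfold updF; rw [if_pos rfl]
    rw [h1]
    congr 1
    apply Finset.prod_congr rfl
    intro j hj
    have : j ≠ n := by simp only [Finset.mem_range] at hj; omega
    unfold updF
    rw [if_neg this]
  rw [hr, Finset.prod_range_succ]
  ring


def M01 (f : ℕ → ℝ) : Prop := Monotone f ∧ ∀ a, 0 ≤ f a ∧ f a ≤ 1

def Br (q : ℕ → ℝ) (f : ℕ → ℝ) : ℕ → ℝ := fun a => q a * f (a+1) + (1 - q a) * f 0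

lemma M01_one : M01 (fun _ => (1:ℝ)) := ⟨monotone_const, fun _ => ⟨zero_le_one, le_rfl⟩⟩

lemma M01_mul {f g : ℕ → ℝ} (hf : M01 f) (hg : M01 g) : M01 (fun a => f a * g a) := by
  refine ⟨?_, fun a => ⟨mul_nonneg (hf.2 a).1 (hg.2 a).1, ?_⟩⟩
  · intro a b hab
    exact mul_le_mul (hf.1 hab) (hg.1 hab) (hg.2 a).1 (le_trans (hf.2 b).1 le_rfl)
  · calc f a * g a ≤ 1 * 1 := mul_le_mul (hf.2 a).2 (hg.2 a).2 (hg.2 a).1 zero_le_one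
    _ = 1 := by ring

lemma M01_Br {q : ℕ → ℝ} (hq : ∀ i, 0 ≤ q i ∧ q i ≤ 1) (hqm : Monotone q)
    {f : ℕ → ℝ} (hf : M01 f) : M01 (Br q f) := by
  constructor
  · intro a b hab
    have h1 : q a ≤ q b := hqm hab
    have h2 : f (a+1) ≤ f (b+1) := hf.1 (by omega)
    have h3 : f 0 ≤ f (a+1) := hf.1 (by omega)
    have key : q a * (f (a+1) - f 0) ≤ q b * (f (b+1) - f 0) :=
      mul_le_mul h1 (by linarith) (by linarith) (hq b).1
    unfold Br
    nlinarith [key]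
  · intro a
    unfold Br
    constructor
    · have := (hq a).1
      have := (hq a).2
      have := (hf.2 (a+1)).1
      have := (hf.2 0).1
      nlinarith
    · have := (hq a).1
      have := (hq a).2
      have := (hf.2 (a+1)).2
      have := (hf.2 0).2
      have := (hf.2 0).1
      nlinarith

lemma Br_mul_le {q : ℕ → ℝ} (hq : ∀ i, 0 ≤ q i ∧ q i ≤ 1)
    {f g : ℕ → ℝ} (hf : M01 f) (hg : M01 g) (a : ℕ) :
    Br q f a * Br q g a ≤ Br q (fun b => f b * g b) a := by
  have key : Br q (fun b => f b * g b) a - Br q f a * Br q g a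
      = q a * (1 - q a) * ((f (a+1) - f 0) * (g (a+1) - g 0)) := by
    unfold Br; ring
  have h1 : 0 ≤ q a * (1 - q a) := mul_nonneg (hq a).1 (by linarith [(hq a).2])
  have h2 : 0 ≤ (f (a+1) - f 0) * (g (a+1) - g 0) :=
    mul_nonneg (by linarith [hf.1 (Nat.zero_le (a+1))]) (by linarith [hg.1 (Nat.zero_le (a+1))])
  nlinarith

lemma site_nonneg {q : ℕ → ℝ} (hq : ∀ i, 0 ≤ q i ∧ q i ≤ 1) (s : Finset ℕ) (j : ℕ) :
    0 ≤ site q s j := by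
  unfold site
  by_cases h : j ∈ s
  · rw [if_pos h]; linarith [(hq (age s (j-1))).2]
  · rw [if_neg h]; exact (hq _).1

lemma Wgt_nonneg {q : ℕ → ℝ} (hq : ∀ i, 0 ≤ q i ∧ q i ≤ 1) (n : ℕ) (s : Finset ℕ) :
    0 ≤ Wgt q n s :=
  Finset.prod_nonneg (fun j _ => site_nonneg hq s j)

lemma Sg_nonneg {q : ℕ → ℝ} (hq : ∀ i, 0 ≤ q i ∧ q i ≤ 1) (n : ℕ) {h : ℕ → ℕ → ℝ}
    (hh : ∀ j a, 0 ≤ h j a) : 0 ≤ Sg q n h := by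
  apply Finset.sum_nonneg
  intro s _
  exact mul_nonneg (Wgt_nonneg hq n s) (Finset.prod_nonneg (fun j _ => hh j _))

lemma Sg_mono {q : ℕ → ℝ} (hq : ∀ i, 0 ≤ q i ∧ q i ≤ 1) (n : ℕ) {h h' : ℕ → ℕ → ℝ}
    (h0 : ∀ j a, 0 ≤ h j a) (hle : ∀ j a, h j a ≤ h' j a) : Sg q n h ≤ Sg q n h' := by
  apply Finset.sum_le_sum
  intro s _
  apply mul_le_mul_of_nonneg_left _ (Wgt_nonneg hq n s)
  exact Finset.prod_le_prod (fun j _ => h0 j _) (fun j _ => hle j _)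

lemma Sg_congr {q : ℕ → ℝ} {n : ℕ} {h h' : ℕ → ℕ → ℝ}
    (he : ∀ j, j ≤ n → h j = h' j) : Sg q n h = Sg q n h' := by
  unfold Sg
  apply Finset.sum_congr rfl
  intro s _
  congr 1
  apply Finset.prod_congr rfl
  intro j hj
  rw [he j (by simp only [Finset.mem_range] at hj; omega)]

lemma Sg_fkg {q : ℕ → ℝ} (hq : ∀ i, 0 ≤ q i ∧ q i ≤ 1) (hqm : Monotone q) :
    ∀ (n : ℕ) (h : ℕ → ℕ → ℝ) (g : ℕ → ℝ), (∀ j, M01 (h j)) → M01 g →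
    Sg q n h * Sg q n (updF (fun _ _ => 1) n g) ≤ Sg q n (updF h n (fun a => h n a * g a)) := by
  intro n
  induction n with
  | zero =>
    intro h g hh hg
    rw [Sg_zero, Sg_zero, Sg_zero]
    have e1 : updF (fun _ _ => (1:ℝ)) 0 g 0 0 = g 0 := by unfold updF; rw [if_pos rfl]
    have e2 : updF h 0 (fun a => h 0 a * g a) 0 0 = h 0 0 * g 0 := by unfold updF; rw [if_pos rfl]
    rw [e1, e2]
  | succ n IH =>
    intro h g hh hg
    set A : ℕ → ℕ → ℝ := updF h n (fun a => h n a * Br q (h (n+1)) a) with hA_def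
    have hA : ∀ j, M01 (A j) := by
      intro j
      by_cases hj : j = n
      · rw [hA_def]; unfold updF; rw [hj, if_pos rfl]
        exact M01_mul (hh n) (M01_Br hq hqm (hh (n+1)))
      · rw [hA_def]; unfold updF; rw [if_neg hj]; exact hh j
    have hBg : M01 (Br q g) := M01_Br hq hqm hg
    -- identification of Sg q (n+1) h with Sg q n A
    have eh : Sg q (n+1) h = Sg q n A := by
      rw [Sg_succ]
      rfl
    -- identification of the single-site factor
    have eg : Sg q (n+1) (updF (fun _ _ => 1) (n+1) g) = Sg q n (updF (fun _ _ => 1) n (Br q g)) := by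
      rw [Sg_succ]
      apply Sg_congr
      intro j hj
      by_cases hjn : j = n
      · funext a
        simp only [updF, Br, hjn, eq_self_iff_true, if_true, if_neg (by omega : n ≠ n + 1)]
        ring
      · funext a
        simp only [updF, if_neg hjn, if_neg (by omega : j ≠ n+1)]
    -- identification of the RHS
    have e1 : Sg q (n+1) (updF h (n+1) (fun a => h (n+1) a * g a))
        = Sg q n (updF h n (fun a => h n a * Br q (fun b => h (n+1) b * g b) a)) := by
      rw [Sg_succ]
      apply Sg_congr
      intro j hj
      by_cases hjn : j = n
      · funext a
        simp only [updF, Br, hjn, eq_self_iff_true, if_true, if_neg (by omega : n ≠ n+1)]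
      · funext a
        simp only [updF, if_neg hjn, if_neg (by omega : j ≠ n+1)]
    calc Sg q (n+1) h * Sg q (n+1) (updF (fun _ _ => 1) (n+1) g)
        = Sg q n A * Sg q n (updF (fun _ _ => 1) n (Br q g)) := by rw [eh, eg]
      _ ≤ Sg q n (updF A n (fun a => A n a * Br q g a)) := IH A (Br q g) hA hBg
      _ ≤ Sg q n (updF h n (fun a => h n a * Br q (fun b => h (n+1) b * g b) a)) := by
          apply Sg_mono hq
          · intro j a
            have hAn : ∀ b, A n b = h n b * Br q (h (n+1)) b := by
              intro b
              rw [hA_def]; unfold updF; rw [if_pos rfl]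
            by_cases hjn : j = n
            · unfold updF
              rw [if_pos hjn, hAn]
              exact mul_nonneg (mul_nonneg ((hh n).2 a).1 ((M01_Br hq hqm (hh (n+1))).2 a).1)
                ((hBg.2 a).1)
            · unfold updF
              rw [if_neg hjn, hA_def]
              unfold updF
              rw [if_neg hjn]
              exact ((hh j).2 a).1
          · intro j a
            have hAn : ∀ b, A n b = h n b * Br q (h (n+1)) b := by
              intro b
              rw [hA_def]; unfold updF; rw [if_pos rfl]
            by_cases hjn : j = n
            · unfold updF
              rw [if_pos hjn, if_pos hjn, hAn, mul_assoc]
              apply mul_le_mul_of_nonneg_left _ ((hh n).2 a).1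
              exact Br_mul_le hq (hh (n+1)) hg a
            · unfold updF
              rw [if_neg hjn, if_neg hjn, hA_def]
              unfold updF
              rw [if_neg hjn]
      _ = Sg q (n+1) (updF h (n+1) (fun a => h (n+1) a * g a)) := e1.symm

lemma Sg_split {q : ℕ → ℝ} (hq : ∀ i, 0 ≤ q i ∧ q i ≤ 1) (hqm : Monotone q) :
    ∀ (n : ℕ) (h : ℕ → ℕ → ℝ), (∀ j, M01 (h j)) → (h 0 = fun _ => 1) →
    (∏ j ∈ Finset.Ioc 0 n, Sg q n (updF (fun _ _ => 1) j (h j))) ≤ Sg q n h := by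
  intro n
  induction n with
  | zero =>
    intro h hh h0
    rw [Sg_zero, h0]
    simp
  | succ n IH =>
    intro h hh h0
    have hstar : ∀ j, M01 ((updF h (n+1) (fun _ => 1)) j) := by
      intro j
      by_cases hj : j = n+1
      · unfold updF; rw [hj, if_pos rfl]; exact M01_one
      · unfold updF; rw [if_neg hj]; exact hh j
    have main := Sg_fkg hq hqm (n+1) (updF h (n+1) (fun _ => 1)) (h (n+1)) hstar (hh (n+1))
    have emain : updF (updF h (n+1) (fun _ => 1)) (n+1)
        (fun a => (updF h (n+1) (fun _ => 1)) (n+1) a * h (n+1) a) = h := by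
      funext j a
      by_cases hj : j = n+1
      · subst hj
        unfold updF
        rw [if_pos rfl, if_pos rfl]
        ring
      · unfold updF
        rw [if_neg hj, if_neg hj]
    rw [emain] at main
    have estar : Sg q (n+1) (updF h (n+1) (fun _ => 1)) = Sg q n h := by
      rw [Sg_succ]
      apply Sg_congr
      intro j hj
      by_cases hjn : j = n
      · funext a
        simp only [updF, hjn, eq_self_iff_true, if_true, if_neg (by omega : n ≠ n+1)]
        ring
      · funext a
        simp only [updF, if_neg hjn, if_neg (by omega : j ≠ n+1)]
    have efac : ∀ j, j ∈ Finset.Ioc 0 n →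
        Sg q (n+1) (updF (fun _ _ => 1) j (h j)) = Sg q n (updF (fun _ _ => 1) j (h j)) := by
      intro j hj
      have hjn : j ≤ n := (Finset.mem_Ioc.1 hj).2
      rw [Sg_succ]
      apply Sg_congr
      intro i hi
      by_cases hin : i = n
      · funext a
        by_cases hnj : (n:ℕ) = j
        · simp only [updF, hin, hnj, eq_self_iff_true, if_true, if_neg (by omega : j+1 ≠ j)]
          ring
        · simp only [updF, hin, eq_self_iff_true, if_true,
            if_neg (by omega : (n:ℕ)+1 ≠ j), if_neg hnj]
          ring
      · funext a
        simp only [updF, if_neg hin]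
    have hfacnn : (0:ℝ) ≤ Sg q (n+1) (updF (fun _ _ => 1) (n+1) (h (n+1))) := by
      apply Sg_nonneg hq
      intro j a
      unfold updF
      by_cases hj : j = n+1
      · rw [if_pos hj]; exact ((hh (n+1)).2 a).1
      · rw [if_neg hj]; norm_num
    rw [show Finset.Ioc 0 (n+1) = insert (n+1) (Finset.Ioc 0 n) from Ioc_zero_succ n,
      Finset.prod_insert (by simp), mul_comm]
    calc (∏ j ∈ Finset.Ioc 0 n, Sg q (n+1) (updF (fun _ _ => 1) j (h j)))
          * Sg q (n+1) (updF (fun _ _ => 1) (n+1) (h (n+1)))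
        = (∏ j ∈ Finset.Ioc 0 n, Sg q n (updF (fun _ _ => 1) j (h j)))
          * Sg q (n+1) (updF (fun _ _ => 1) (n+1) (h (n+1))) := by
          rw [Finset.prod_congr rfl efac]
      _ ≤ Sg q n h * Sg q (n+1) (updF (fun _ _ => 1) (n+1) (h (n+1))) :=
          mul_le_mul_of_nonneg_right (IH h hh h0) hfacnn
      _ = Sg q (n+1) (updF h (n+1) (fun _ => 1)) * Sg q (n+1) (updF (fun _ _ => 1) (n+1) (h (n+1))) := by
          rw [estar]
      _ ≤ Sg q (n+1) h := main

def pTr (q : ℕ → ℝ) (g : ℕ) : ℝ := (1 - q (g-1)) * ∏ i ∈ Finset.range (g-1), q i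

def tailr (q : ℕ → ℝ) (m : ℕ) : ℝ := ∏ i ∈ Finset.range m, q i

lemma Ioc_self_add_one (a : ℕ) : Finset.Ioc a (a+1) = {a+1} := by
  apply Finset.ext; intro y
  simp only [Finset.mem_Ioc, Finset.mem_singleton]
  omega

lemma prod_Ioc_eq_range (g : ℕ → ℝ) (t n : ℕ) :
    ∏ j ∈ Finset.Ioc t n, g (j - 1 - t) = ∏ i ∈ Finset.range (n - t), g i := by
  apply Finset.prod_nbij' (fun j => j - 1 - t) (fun i => t + 1 + i)
  · intro a ha
    simp only [Finset.mem_Ioc] at ha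
    simp only [Finset.mem_range]
    omega
  · intro a ha
    simp only [Finset.mem_range] at ha
    simp only [Finset.mem_Ioc]
    omega
  · intro a ha
    simp only [Finset.mem_Ioc] at ha
    omega
  · intro a ha
    simp only [Finset.mem_range] at ha
    omega
  · intro a _
    rfl

lemma GI (q : ℕ → ℝ) :
    ∀ (k : ℕ) (s : Finset ℕ) (n : ℕ), s.card = k → s ⊆ Finset.Ioc 0 n →
    (∏ l ∈ Finset.range k, pTr q (nth s (l+1) - nth s l)) * tailr q (n - nth s k)
      = Wgt q n s := by
  intro k
  induction k with
  | zero =>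
    intro s n hcard hsub
    have hs : s = ∅ := Finset.card_eq_zero.1 hcard
    subst hs
    rw [Finset.prod_range_zero, one_mul]
    show tailr q (n - nth ∅ 0) = Wgt q n ∅
    have h0 : nth (∅ : Finset ℕ) 0 = 0 := rfl
    rw [h0, Nat.sub_zero]
    unfold Wgt tailr
    have hsite : ∀ j ∈ Finset.Ioc 0 n, site q ∅ j = q (j - 1 - 0) := by
      intro j hj
      unfold site
      rw [if_neg (Finset.notMem_empty j), age_empty, Nat.sub_zero]
    rw [Finset.prod_congr rfl hsite, prod_Ioc_eq_range q 0 n, Nat.sub_zero]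
  | succ k IH =>
    intro s n hcard hsub
    have hne : s.Nonempty := Finset.card_pos.1 (by omega)
    have h0s : 0 ∉ s := by
      intro h
      have := (Finset.mem_Ioc.1 (hsub h)).1
      omega
    have htmem : nth s (k+1) ∈ s := by
      have := nth_max h0s hne
      rwa [hcard] at this
    set t := nth s (k+1) with ht
    have htmax : ∀ y ∈ s, y ≤ t := by
      have := nth_top h0s
      rwa [hcard] at this
    have ht1 : 1 ≤ t := (Finset.mem_Ioc.1 (hsub htmem)).1
    have htn : t ≤ n := (Finset.mem_Ioc.1 (hsub htmem)).2
    set s' := s.erase t with hs'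
    have hcard' : s'.card = k := by
      rw [hs', Finset.card_erase_of_mem htmem, hcard]
      omega
    have hnth' : ∀ l, l ≤ k → nth s' l = nth s l := by
      intro l hl
      have := nth_erase_max h0s hne l (by omega)
      rwa [hcard] at this
    set t' := nth s k with ht'
    have ht't : t' < t := nth_strict_mono h0s (by omega) (by omega)
    have hs'sub : s' ⊆ Finset.Ioc 0 (t-1) := by
      intro y hy
      rw [hs', Finset.mem_erase] at hy
      have h1 := (Finset.mem_Ioc.1 (hsub hy.2)).1
      have h2 := htmax y hy.2
      simp only [Finset.mem_Ioc]
      constructor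
      · omega
      · have : y ≠ t := hy.1
        omega
    have IH' := IH s' (t-1) hcard' hs'sub
    have hgap : ∀ l ∈ Finset.range k,
        pTr q (nth s' (l+1) - nth s' l) = pTr q (nth s (l+1) - nth s l) := by
      intro l hl
      simp only [Finset.mem_range] at hl
      rw [hnth' (l+1) (by omega), hnth' l (by omega)]
    -- last renewal before t
    have hlst : lst s (t-1) = t' := by
      rcases Nat.eq_zero_or_pos k with hk | hk
      · subst hk
        have hsing : ∀ z ∈ s, z = t := by
          intro z hz
          have hcard1 : s.card = 1 := hcard
          obtain ⟨b, hb⟩ := Finset.card_eq_one.1 hcard1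
          rw [hb] at hz htmem
          simp only [Finset.mem_singleton] at hz htmem
          omega
        have : lst s (t-1) = 0 := by
          apply lst_eq_zero_of
          intro z hz
          rw [hsing z hz]
          omega
        rw [this, ht']
        rfl
      · have ht'mem : t' ∈ s := by
          have := (nth_succ_spec h0s (show k-1 < s.card by omega)).1
          have hkk : k - 1 + 1 = k := by omega
          rw [hkk] at this
          exact this
        apply lst_eq_of s ht'mem (by omega)
        intro z hz hzle
        by_contra hgt
        have := (nth_succ_spec h0s (show k < s.card by omega)).2.2 z hz (by omega)
        rw [← ht] at this
        omega
    -- site factors agree below t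
    have hsite' : ∀ j ∈ Finset.Ioc 0 (t-1), site q s j = site q s' j := by
      intro j hj
      have hjle : j ≤ t-1 := (Finset.mem_Ioc.1 hj).2
      have hmem : j ∈ s ↔ j ∈ s' := by
        rw [hs', Finset.mem_erase]
        constructor
        · intro h
          exact ⟨by omega, h⟩
        · intro h
          exact h.2
      have hage : age s (j-1) = age s' (j-1) := by
        apply age_congr
        intro y hy
        rw [hs', Finset.mem_erase]
        constructor
        · intro h
          refine ⟨by omega, h⟩
        · intro h
          exact h.2
      unfold site
      rw [hage]
      by_cases hjs : j ∈ s
      · rw [if_pos hjs, if_pos (hmem.1 hjs)]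
      · rw [if_neg hjs, if_neg (fun hh => hjs (hmem.2 hh))]
    -- site factor at t
    have hsitet : site q s t = 1 - q (t - 1 - t') := by
      unfold site
      rw [if_pos htmem]
      unfold age
      rw [hlst]
    -- site factors above t
    have hsiteup : ∀ j ∈ Finset.Ioc t n, site q s j = q (j - 1 - t) := by
      intro j hj
      have hjt : t < j := (Finset.mem_Ioc.1 hj).1
      have hjn : j ≤ n := (Finset.mem_Ioc.1 hj).2
      have hnot : j ∉ s := by
        intro h
        have := htmax j h
        omega
      unfold site
      rw [if_neg hnot]
      have : lst s (j-1) = t := lst_eq_of s htmem (by omega) (fun z hz _ => htmax z hz)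
      unfold age
      rw [this]
    -- split the weight product
    have hsplit : Wgt q n s
        = Wgt q (t-1) s' * (1 - q (t - 1 - t')) * tailr q (n - t) := by
      unfold Wgt
      have e1 : Finset.Ioc 0 n = Finset.Ioc 0 (t-1) ∪ Finset.Ioc (t-1) n := by
        rw [Finset.Ioc_union_Ioc_eq_Ioc (by omega) (by omega)]
      have e2 : Finset.Ioc (t-1) n = Finset.Ioc (t-1) t ∪ Finset.Ioc t n := by
        rw [Finset.Ioc_union_Ioc_eq_Ioc (by omega) (by omega)]
      have e3 : Finset.Ioc (t-1) t = {t} := by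
        apply Finset.ext; intro y
        simp only [Finset.mem_Ioc, Finset.mem_singleton]
        omega
      have hd1 : Disjoint (Finset.Ioc 0 (t-1)) (Finset.Ioc (t-1) n) := by
        apply Finset.disjoint_left.2
        intro a ha hb
        simp only [Finset.mem_Ioc] at ha hb
        omega
      have hd2 : Disjoint (Finset.Ioc (t-1) t) (Finset.Ioc t n) := by
        apply Finset.disjoint_left.2
        intro a ha hb
        simp only [Finset.mem_Ioc] at ha hb
        omega
      rw [e1, Finset.prod_union hd1, e2, Finset.prod_union hd2, e3, Finset.prod_singleton]
      rw [Finset.prod_congr rfl hsite', hsitet, Finset.prod_congr rfl hsiteup,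
        prod_Ioc_eq_range q t n]
      unfold tailr
      ring
    -- conclude
    rw [Finset.prod_range_succ, Finset.prod_congr rfl (fun l hl => (hgap l hl).symm)]
    rw [hsplit, ← IH']
    have hnth'k : nth s' k = t' := by rw [hnth' k le_rfl]
    rw [hnth'k]
    have hpTr : pTr q (t - t') = (1 - q (t - 1 - t')) * tailr q (t - 1 - t') := by
      unfold pTr tailr
      have : t - t' - 1 = t - 1 - t' := by omega
      rw [this]
    rw [← ht, hpTr]
    ring



section Meas

variable {Ω : Type*} [MeasurableSpace Ω]

/-- partial sums of the inter-arrival times -/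
def SS (T : ℕ → Ω → ℕ∞) (j : ℕ) (ω : Ω) : ℕ∞ := ∑ l ∈ Finset.range j, T l ω

lemma SS_zero (T : ℕ → Ω → ℕ∞) (ω : Ω) : SS T 0 ω = 0 := by simp [SS]

lemma SS_succ (T : ℕ → Ω → ℕ∞) (j : ℕ) (ω : Ω) : SS T (j+1) ω = SS T j ω + T j ω :=
  Finset.sum_range_succ _ _

lemma SS_mono (T : ℕ → Ω → ℕ∞) {j j' : ℕ} (h : j ≤ j') (ω : Ω) : SS T j ω ≤ SS T j' ω := by
  apply Finset.sum_le_sum_of_subset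
  exact Finset.range_subset_range.2 h

lemma SS_lt_succ {T : ℕ → Ω → ℕ∞} (hT1 : ∀ j ω, 1 ≤ T j ω) {j : ℕ} {ω : Ω}
    (hfin : SS T j ω ≠ ⊤) : SS T j ω < SS T (j+1) ω := by
  rw [SS_succ]
  calc SS T j ω < SS T j ω + 1 := (ENat.lt_add_one_iff hfin).2 le_rfl
    _ ≤ SS T j ω + T j ω := add_le_add le_rfl (hT1 j ω)

lemma xi_eq_one_iff (T : ℕ → Ω → ℕ∞) (i : ℕ) (ω : Ω) :
    xi T i ω = 1 ↔ ∃ j, SS T j ω = (i : ℕ∞) := by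
  unfold xi SS
  by_cases h : ∃ j : ℕ, (∑ l ∈ Finset.range j, T l ω) = (i : ℕ∞)
  · simp [h]
  · simp [h]

lemma xi_eq_zero_iff (T : ℕ → Ω → ℕ∞) (i : ℕ) (ω : Ω) :
    xi T i ω = 0 ↔ ¬ ∃ j, SS T j ω = (i : ℕ∞) := by
  unfold xi SS
  by_cases h : ∃ j : ℕ, (∑ l ∈ Finset.range j, T l ω) = (i : ℕ∞)
  · simp [h]
  · simp [h]

lemma xi_cases (T : ℕ → Ω → ℕ∞) (i : ℕ) (ω : Ω) : xi T i ω = 0 ∨ xi T i ω = 1 := by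
  unfold xi
  by_cases h : ∃ j : ℕ, (∑ l ∈ Finset.range j, T l ω) = (i : ℕ∞)
  · right; simp [h]
  · left; simp [h]

lemma measurable_SS {T : ℕ → Ω → ℕ∞} (hTmeas : ∀ j, Measurable (T j)) (j : ℕ) :
    Measurable (SS T j) := by
  apply Finset.measurable_sum
  exact fun l _ => hTmeas l

lemma measurableSet_xi_one {T : ℕ → Ω → ℕ∞} (hTmeas : ∀ j, Measurable (T j)) (i : ℕ) :
    MeasurableSet {ω : Ω | xi T i ω = 1} := by
  have : {ω : Ω | xi T i ω = 1} = ⋃ j : ℕ, (SS T j) ⁻¹' {(i : ℕ∞)} := by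
    apply Set.ext
    intro ω
    simp only [Set.mem_setOf_eq, Set.mem_iUnion, Set.mem_preimage, Set.mem_singleton_iff]
    exact xi_eq_one_iff T i ω
  rw [this]
  exact MeasurableSet.iUnion (fun j => (measurable_SS hTmeas j) (by measurability))

/-- the event that the renewal pattern on `(0, n]` is exactly `s` -/
def Ev (T : ℕ → Ω → ℕ∞) (n : ℕ) (s : Finset ℕ) : Set Ω :=
  {ω | ∀ j ∈ Finset.Ioc 0 n, (xi T j ω = 1 ↔ j ∈ s)}

lemma measurableSet_Ev {T : ℕ → Ω → ℕ∞} (hTmeas : ∀ j, Measurable (T j)) (n : ℕ)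
    (s : Finset ℕ) : MeasurableSet (Ev T n s) := by
  have : Ev T n s = ⋂ j ∈ Finset.Ioc 0 n,
      (if j ∈ s then {ω : Ω | xi T j ω = 1} else {ω : Ω | xi T j ω = 1}ᶜ) := by
    apply Set.ext
    intro ω
    simp only [Ev, Set.mem_setOf_eq, Set.mem_iInter]
    constructor
    · intro h j hj
      by_cases hjs : j ∈ s
      · rw [if_pos hjs]
        exact (h j hj).2 hjs
      · rw [if_neg hjs]
        intro hx
        exact hjs ((h j hj).1 hx)
    · intro h j hj
      by_cases hjs : j ∈ s
      · have := h j hj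
        rw [if_pos hjs] at this
        exact ⟨fun _ => hjs, fun _ => this⟩
      · have := h j hj
        rw [if_neg hjs] at this
        exact ⟨fun hx => absurd hx this, fun hjs' => absurd hjs' hjs⟩
  rw [this]
  apply MeasurableSet.biInter (Set.to_countable _)
  intro j _
  by_cases hjs : j ∈ s
  · rw [if_pos hjs]; exact measurableSet_xi_one hTmeas j
  · rw [if_neg hjs]; exact (measurableSet_xi_one hTmeas j).compl

lemma exists_nat_of_ne_top {x : ℕ∞} (h : x ≠ ⊤) : ∃ m : ℕ, x = (m : ℕ∞) := by
  lift x to ℕ using h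
  exact ⟨x, rfl⟩

/-- the representation of the pattern event through the inter-arrival variables -/
lemma Ev_rep {T : ℕ → Ω → ℕ∞} (hT1 : ∀ j ω, 1 ≤ T j ω) (n : ℕ) (s : Finset ℕ)
    (hs : s ⊆ Finset.Ioc 0 n) :
    Ev T n s = ⋂ l ∈ Finset.range (s.card + 1), (T l) ⁻¹'
      (if l < s.card then {((nth s (l+1) - nth s l : ℕ) : ℕ∞)}
       else Set.Ioi ((n - nth s s.card : ℕ) : ℕ∞)) := by
  have h0s : 0 ∉ s := by
    intro h
    have := (Finset.mem_Ioc.1 (hs h)).1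
    omega
  obtain ⟨k, hk⟩ : ∃ k, s.card = k := ⟨_, rfl⟩
  have hnth_le_n : ∀ l, l ≤ k → nth s l ≤ n := by
    intro l hl
    rcases Nat.eq_zero_or_pos l with h | h
    · subst h
      show (0:ℕ) ≤ n
      omega
    · have hmem : nth s l ∈ s := by
        have := (nth_succ_spec h0s (show l - 1 < s.card by omega)).1
        have hll : l - 1 + 1 = l := by omega
        rwa [hll] at this
      exact (Finset.mem_Ioc.1 (hs hmem)).2
  apply Set.ext
  intro ω
  simp only [Set.mem_iInter, Set.mem_preimage, Finset.mem_range, hk]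
  constructor
  · -- pattern → T-constraints
    intro hpat
    have hSS : ∀ l, l ≤ k → SS T l ω = ((nth s l : ℕ) : ℕ∞) := by
      intro l
      induction l with
      | zero =>
        intro _
        rw [SS_zero]
        rfl
      | succ l ih =>
        intro hl
        have hprev := ih (by omega)
        have hlk : l < k := by omega
        have hspec := nth_succ_spec h0s (show l < s.card by omega)
        set b := nth s (l+1) with hb
        have hbs : b ∈ s := hspec.1
        have hbI : b ∈ Finset.Ioc 0 n := hs hbs
        have hbn : b ≤ n := (Finset.mem_Ioc.1 hbI).2
        have hxi : xi T b ω = 1 := (hpat b hbI).2 hbs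
        obtain ⟨m, hm⟩ := (xi_eq_one_iff T b ω).1 hxi
        have hfin : SS T l ω ≠ ⊤ := by
          rw [hprev]
          simp
        have hlt : SS T l ω < SS T (l+1) ω := SS_lt_succ hT1 hfin
        have hml : l + 1 ≤ m := by
          by_contra hcon
          push_neg at hcon
          have h1 : SS T m ω ≤ SS T l ω := SS_mono T (by omega) ω
          rw [hm, hprev] at h1
          have h3 : b ≤ nth s l := by exact_mod_cast h1
          have := hspec.2.1
          omega
        have hle : SS T (l+1) ω ≤ (b : ℕ∞) := by
          rw [← hm]
          exact SS_mono T hml ω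
        have hfin1 : SS T (l+1) ω ≠ ⊤ := by
          intro htop
          rw [htop] at hle
          simp at hle
        obtain ⟨j', hj'⟩ := exists_nat_of_ne_top hfin1
        rw [hj'] at hle hlt ⊢
        rw [hprev] at hlt
        have hj'b : j' ≤ b := by exact_mod_cast hle
        have hj'l : nth s l < j' := by exact_mod_cast hlt
        by_cases hj'eq : j' = b
        · rw [hj'eq]
        · exfalso
          have hj'n : j' ∈ Finset.Ioc 0 n := Finset.mem_Ioc.2 ⟨by omega, by omega⟩
          have hxi' : xi T j' ω = 1 := (xi_eq_one_iff T j' ω).2 ⟨l+1, hj'⟩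
          have hj's : j' ∈ s := (hpat j' hj'n).1 hxi'
          have := hspec.2.2 j' hj's hj'l
          omega
    intro l hl
    rcases Nat.lt_or_ge l k with hlk | hlk
    · rw [if_pos hlk]
      have h1 := hSS l (by omega)
      have h2 := hSS (l+1) (by omega)
      rw [SS_succ, h1] at h2
      have hmono : nth s l ≤ nth s (l+1) :=
        le_of_lt (nth_strict_mono h0s (by omega) (show l+1 ≤ s.card by omega))
      have hTfin : T l ω ≠ ⊤ := by
        intro htop
        rw [htop] at h2
        simp at h2
      obtain ⟨x, hx⟩ := exists_nat_of_ne_top hTfin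
      rw [hx] at h2 ⊢
      rw [← Nat.cast_add] at h2
      have h3 : nth s l + x = nth s (l+1) := by exact_mod_cast h2
      simp only [Set.mem_singleton_iff]
      exact_mod_cast (by omega : x = nth s (l+1) - nth s l)
    · have hlk' : l = k := by omega
      rw [if_neg (by omega)]
      subst hlk'
      have hSSl := hSS l le_rfl
      have hfin : SS T l ω ≠ ⊤ := by rw [hSSl]; simp
      have hgt : (n : ℕ∞) < SS T (l+1) ω := by
        by_contra hcon
        push_neg at hcon
        have hlt : SS T l ω < SS T (l+1) ω := SS_lt_succ hT1 hfin
        have hfin1 : SS T (l+1) ω ≠ ⊤ := by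
          intro htop
          rw [htop] at hcon
          exact (by simp : ((n:ℕ) : ℕ∞) ≠ ⊤) (top_le_iff.1 hcon)
        obtain ⟨j', hj'⟩ := exists_nat_of_ne_top hfin1
        rw [hj'] at hcon hlt
        rw [hSSl] at hlt
        have hj'n : j' ≤ n := by exact_mod_cast hcon
        have hj'l : nth s l < j' := by exact_mod_cast hlt
        have hj'I : j' ∈ Finset.Ioc 0 n := Finset.mem_Ioc.2 ⟨by omega, hj'n⟩
        have hxi' : xi T j' ω = 1 := (xi_eq_one_iff T j' ω).2 ⟨l+1, hj'⟩
        have hj's : j' ∈ s := (hpat j' hj'I).1 hxi'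
        have := nth_top h0s j' hj's
        rw [hk] at this
        omega
      rw [SS_succ, hSSl] at hgt
      simp only [Set.mem_Ioi]
      rcases eq_or_ne (T l ω) ⊤ with htop | htop
      · rw [htop]
        exact lt_top_iff_ne_top.2 (by simp)
      · obtain ⟨x, hx⟩ := exists_nat_of_ne_top htop
        rw [hx] at hgt ⊢
        rw [← Nat.cast_add] at hgt
        have h3 : n < nth s l + x := by exact_mod_cast hgt
        have := hnth_le_n l le_rfl
        exact_mod_cast (by omega : n - nth s l < x)
  · -- T-constraints → pattern
    intro hT
    have hSS : ∀ l, l ≤ k → SS T l ω = ((nth s l : ℕ) : ℕ∞) := by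
      intro l
      induction l with
      | zero =>
        intro _
        rw [SS_zero]
        rfl
      | succ l ih =>
        intro hl
        have hprev := ih (by omega)
        have hcons := hT l (by omega)
        rw [if_pos (by omega : l < k)] at hcons
        simp only [Set.mem_singleton_iff] at hcons
        rw [SS_succ, hprev, hcons, ← Nat.cast_add]
        have hmono : nth s l ≤ nth s (l+1) :=
          le_of_lt (nth_strict_mono h0s (by omega) (show l+1 ≤ s.card by omega))
        congr 1
        omega
    have hSSk := hSS k le_rfl
    have htail := hT k (by omega)
    rw [if_neg (by omega)] at htail
    simp only [Set.mem_Ioi] at htail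
    have hgt : (n : ℕ∞) < SS T (k+1) ω := by
      rw [SS_succ, hSSk]
      have hle := hnth_le_n k le_rfl
      rcases eq_or_ne (T k ω) ⊤ with htop | htop
      · rw [htop, show ((nth s k : ℕ) : ℕ∞) + ⊤ = ⊤ from by simp]
        exact lt_top_iff_ne_top.2 (by simp)
      · obtain ⟨x, hx⟩ := exists_nat_of_ne_top htop
        rw [hx] at htail ⊢
        rw [← Nat.cast_add]
        have h1 : n - nth s k < x := by exact_mod_cast htail
        exact_mod_cast (by omega : n < nth s k + x)
    intro j hj
    constructor
    · intro hxi
      obtain ⟨m, hm⟩ := (xi_eq_one_iff T j ω).1 hxi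
      have hjI := Finset.mem_Ioc.1 hj
      have hmk : m ≤ k := by
        by_contra hcon
        push_neg at hcon
        have h1 : SS T (k+1) ω ≤ SS T m ω := SS_mono T (by omega) ω
        rw [hm] at h1
        have h2 : (n : ℕ∞) < (j : ℕ∞) := lt_of_lt_of_le hgt h1
        have : n < j := by exact_mod_cast h2
        omega
      have hm1 : 1 ≤ m := by
        by_contra hcon
        push_neg at hcon
        have : m = 0 := by omega
        subst this
        rw [SS_zero] at hm
        have : (0:ℕ) = j := by exact_mod_cast hm
        omega
      have := hSS m hmk
      rw [this] at hm
      have hnm : nth s m = j := by exact_mod_cast hm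
      rw [nth_mem_iff h0s]
      exact ⟨m - 1, by omega, by rw [show m - 1 + 1 = m by omega]; exact hnm⟩
    · intro hjs
      obtain ⟨l, hlk, hval⟩ := (nth_mem_iff h0s).1 hjs
      apply (xi_eq_one_iff T j ω).2
      exact ⟨l+1, by rw [hSS (l+1) (by omega), hval]⟩

end Meas

section Prob

open MeasureTheory ProbabilityTheory

variable {Ω : Type*} [MeasurableSpace Ω]

lemma tail_prob (P : Measure Ω) [IsProbabilityMeasure P] (T0 : Ω → ℕ∞)
    (hmeas : Measurable T0) (h1 : ∀ ω, 1 ≤ T0 ω) (q : ℕ → ℝ)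
    (hq : ∀ i, 0 ≤ q i ∧ q i < 1)
    (hTq : ∀ n : ℕ, 1 ≤ n → P {ω | T0 ω = (n : ℕ∞)} =
      ENNReal.ofReal ((1 - q (n - 1)) * ∏ i ∈ Finset.range (n - 1), q i)) :
    ∀ m : ℕ, P {ω | (m : ℕ∞) < T0 ω} = ENNReal.ofReal (tailr q m) := by
  intro m
  induction m with
  | zero =>
    have huniv : {ω | ((0:ℕ) : ℕ∞) < T0 ω} = Set.univ := by
      apply Set.eq_univ_of_forall
      intro ω
      show ((0:ℕ) : ℕ∞) < T0 ω
      calc ((0:ℕ) : ℕ∞) = 0 := by norm_cast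
        _ < 1 := zero_lt_one
        _ ≤ T0 ω := h1 ω
    rw [huniv, measure_univ]
    unfold tailr
    rw [Finset.prod_range_zero, ENNReal.ofReal_one]
  | succ m ih =>
    have hsplit : {ω | ((m:ℕ) : ℕ∞) < T0 ω}
        = {ω | T0 ω = ((m+1 : ℕ) : ℕ∞)} ∪ {ω | ((m+1 : ℕ) : ℕ∞) < T0 ω} := by
      apply Set.ext
      intro ω
      simp only [Set.mem_setOf_eq, Set.mem_union]
      constructor
      · intro h
        rcases eq_or_ne (T0 ω) ⊤ with htop | htop
        · right
          rw [htop]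
          apply lt_top_iff_ne_top.2
          have hcast : (((m:ℕ)+1 : ℕ∞)) = ((m+1 : ℕ) : ℕ∞) := by push_cast; ring
          rw [show ((m+1:ℕ) : ℕ∞) = ((m:ℕ∞) + 1) from hcast.symm]
          exact fun hh => ENat.coe_ne_top (m+1) (hcast ▸ hh)
        · obtain ⟨x, hx⟩ := exists_nat_of_ne_top htop
          rw [hx] at h ⊢
          have : m < x := by exact_mod_cast h
          rcases eq_or_ne x (m+1) with he | hne
          · left; rw [he]
          · right
            exact_mod_cast (by omega : m + 1 < x)
      · intro h
        rcases h with h | h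
        · rw [h]
          exact_mod_cast (by omega : m < m + 1)
        · calc ((m:ℕ) : ℕ∞) < ((m+1:ℕ) : ℕ∞) := by exact_mod_cast (by omega : m < m+1)
            _ < T0 ω := h
    have hdisj : Disjoint {ω : Ω | T0 ω = ((m+1 : ℕ) : ℕ∞)} {ω : Ω | ((m+1 : ℕ) : ℕ∞) < T0 ω} := by
      apply Set.disjoint_left.2
      intro ω h1' h2'
      simp only [Set.mem_setOf_eq] at h1' h2'
      rw [h1'] at h2'
      exact lt_irrefl _ h2'
    have hmeas2 : MeasurableSet {ω : Ω | ((m+1 : ℕ) : ℕ∞) < T0 ω} :=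
      hmeas (MeasurableSet.of_discrete (s := Set.Ioi ((m+1 : ℕ) : ℕ∞)))
    have hadd := measure_union (μ := P) hdisj hmeas2
    rw [← hsplit] at hadd
    have hm1 := hTq (m+1) (by omega)
    simp only [Nat.add_sub_cancel] at hm1
    have heq : P {ω | ((m+1 : ℕ) : ℕ∞) < T0 ω}
        = P {ω | ((m:ℕ) : ℕ∞) < T0 ω} - P {ω | T0 ω = ((m+1 : ℕ) : ℕ∞)} := by
      apply ENNReal.eq_sub_of_add_eq (measure_ne_top P _)
      rw [add_comm]
      exact hadd.symm
    rw [heq, ih, hm1]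
    have hnn : (0:ℝ) ≤ (1 - q m) * ∏ i ∈ Finset.range m, q i := by
      apply mul_nonneg
      · linarith [(hq m).2]
      · exact Finset.prod_nonneg (fun i _ => (hq i).1)
    rw [← ENNReal.ofReal_sub _ hnn]
    congr 1
    unfold tailr
    rw [Finset.prod_range_succ]
    ring

lemma P_Ev (P : Measure Ω) [IsProbabilityMeasure P] (T : ℕ → Ω → ℕ∞)
    (hT1 : ∀ j ω, 1 ≤ T j ω) (hTmeas : ∀ j, Measurable (T j))
    (hTindep : iIndepFun T P)
    (hTident : ∀ j, Measure.map (T j) P = Measure.map (T 0) P)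
    (q : ℕ → ℝ) (hq : ∀ i, 0 ≤ q i ∧ q i < 1)
    (hTq : ∀ n : ℕ, 1 ≤ n → P {ω | T 0 ω = (n : ℕ∞)} =
      ENNReal.ofReal ((1 - q (n - 1)) * ∏ i ∈ Finset.range (n - 1), q i))
    (n : ℕ) (s : Finset ℕ) (hs : s ⊆ Finset.Ioc 0 n) :
    P (Ev T n s) = ENNReal.ofReal (Wgt q n s) := by
  have h0s : 0 ∉ s := by
    intro h
    have := (Finset.mem_Ioc.1 (hs h)).1
    omega
  set C : ℕ → Set ℕ∞ := fun l =>
    (if l < s.card then {((nth s (l+1) - nth s l : ℕ) : ℕ∞)}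
     else Set.Ioi ((n - nth s s.card : ℕ) : ℕ∞)) with hC
  rw [Ev_rep hT1 n s hs]
  have hindep := hTindep.meas_biInter (S := Finset.range (s.card + 1))
    (s := fun l => (T l) ⁻¹' (C l)) (fun l _ => ⟨C l, trivial, rfl⟩)
  rw [hindep]
  -- each marginal
  have hmarg : ∀ l, P ((T l) ⁻¹' (C l)) = P ((T 0) ⁻¹' (C l)) := by
    intro l
    rw [← Measure.map_apply (hTmeas l) trivial, hTident l,
      Measure.map_apply (hTmeas 0) trivial]
  have hfactor : ∀ l ∈ Finset.range s.card,
      P ((T l) ⁻¹' (C l)) = ENNReal.ofReal (pTr q (nth s (l+1) - nth s l)) := by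
    intro l hl
    simp only [Finset.mem_range] at hl
    rw [hmarg l]
    have hCl : C l = {((nth s (l+1) - nth s l : ℕ) : ℕ∞)} := by
      rw [hC]
      simp only [if_pos hl]
    rw [hCl]
    have hgap : 1 ≤ nth s (l+1) - nth s l := by
      have := nth_strict_mono h0s (show l < l+1 by omega) (show l+1 ≤ s.card by omega)
      omega
    have := hTq (nth s (l+1) - nth s l) hgap
    rw [show (T 0) ⁻¹' {((nth s (l+1) - nth s l : ℕ) : ℕ∞)}
      = {ω | T 0 ω = ((nth s (l+1) - nth s l : ℕ) : ℕ∞)} from rfl, this]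
    rfl
  have hlast : P ((T s.card) ⁻¹' (C s.card)) = ENNReal.ofReal (tailr q (n - nth s s.card)) := by
    rw [hmarg]
    have hCk : C s.card = Set.Ioi ((n - nth s s.card : ℕ) : ℕ∞) := by
      rw [hC]
      simp only [if_neg (lt_irrefl s.card)]
    rw [hCk]
    have := tail_prob P (T 0) (hTmeas 0) (fun ω => hT1 0 ω) q hq hTq (n - nth s s.card)
    rw [← this]
    rfl
  rw [Finset.prod_range_succ, Finset.prod_congr rfl hfactor, hlast]
  rw [← ENNReal.ofReal_prod_of_nonneg (fun l _ => by
    unfold pTr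
    apply mul_nonneg
    · linarith [(hq (nth s (l+1) - nth s l - 1)).2]
    · exact Finset.prod_nonneg (fun i _ => (hq i).1))]
  rw [← ENNReal.ofReal_mul (Finset.prod_nonneg (fun l _ => by
    unfold pTr
    apply mul_nonneg
    · linarith [(hq (nth s (l+1) - nth s l - 1)).2]
    · exact Finset.prod_nonneg (fun i _ => (hq i).1)))]
  rw [GI q s.card s n rfl hs]

end Prob

section Integral

open MeasureTheory ProbabilityTheory

variable {Ω : Type*} [MeasurableSpace Ω]

lemma prod_pow_xi_eq {T : ℕ → Ω → ℕ∞} (n : ℕ) (γ : ℕ → ℝ) (ω : Ω) :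
    ∏ j ∈ Finset.Ioc 0 n, γ j ^ (xi T j ω)
      = ∑ s ∈ (Finset.Ioc 0 n).powerset,
          Set.indicator (Ev T n s) (fun _ => ∏ j ∈ s, γ j) ω := by
  classical
  set s₀ : Finset ℕ := (Finset.Ioc 0 n).filter (fun j => xi T j ω = 1) with hs₀
  have hmem : s₀ ∈ (Finset.Ioc 0 n).powerset := Finset.mem_powerset.2 (Finset.filter_subset _ _)
  have hEv : ω ∈ Ev T n s₀ := by
    intro j hj
    rw [hs₀]
    simp only [Finset.mem_filter]
    constructor
    · intro hx
      exact ⟨hj, hx⟩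
    · intro hx
      exact hx.2
  rw [Finset.sum_eq_single_of_mem s₀ hmem]
  · rw [Set.indicator_of_mem hEv]
    rw [hs₀, Finset.prod_filter]
    apply Finset.prod_congr rfl
    intro j hj
    rcases xi_cases T j ω with h | h
    · rw [h, if_neg (by omega), pow_zero]
    · rw [h, pow_one, if_pos rfl]
  · intro s hsp hne
    rw [Set.indicator_of_notMem]
    intro hEvs
    apply hne
    have hsub := Finset.mem_powerset.1 hsp
    apply Finset.ext
    intro j
    constructor
    · intro hjs
      rw [hs₀, Finset.mem_filter]
      exact ⟨hsub hjs, (hEvs j (hsub hjs)).2 hjs⟩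
    · intro hj0
      rw [hs₀, Finset.mem_filter] at hj0
      exact (hEvs j hj0.1).1 hj0.2

lemma integral_prod_xi (P : Measure Ω) [IsProbabilityMeasure P] (T : ℕ → Ω → ℕ∞)
    (hTmeas : ∀ j, Measurable (T j)) (n : ℕ) (γ : ℕ → ℝ) :
    ∫ ω, ∏ j ∈ Finset.Ioc 0 n, γ j ^ (xi T j ω) ∂P
      = ∑ s ∈ (Finset.Ioc 0 n).powerset, (P (Ev T n s)).toReal * ∏ j ∈ s, γ j := by
  have hint : ∀ s ∈ (Finset.Ioc 0 n).powerset,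
      Integrable (Set.indicator (Ev T n s) (fun _ => ∏ j ∈ s, γ j)) P := by
    intro s _
    exact (integrable_const _).indicator (measurableSet_Ev hTmeas n s)
  calc ∫ ω, ∏ j ∈ Finset.Ioc 0 n, γ j ^ (xi T j ω) ∂P
      = ∫ ω, ∑ s ∈ (Finset.Ioc 0 n).powerset,
          Set.indicator (Ev T n s) (fun _ => ∏ j ∈ s, γ j) ω ∂P := by
        apply integral_congr_ae
        apply Filter.Eventually.of_forall
        intro ω
        exact prod_pow_xi_eq n γ ω
    _ = ∑ s ∈ (Finset.Ioc 0 n).powerset,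
          ∫ ω, Set.indicator (Ev T n s) (fun _ => ∏ j ∈ s, γ j) ω ∂P :=
        integral_finset_sum _ hint
    _ = ∑ s ∈ (Finset.Ioc 0 n).powerset, (P (Ev T n s)).toReal * ∏ j ∈ s, γ j := by
        apply Finset.sum_congr rfl
        intro s _
        rw [integral_indicator_const _ (measurableSet_Ev hTmeas n s), smul_eq_mul, measureReal_def]

def hhF (γ : ℕ → ℝ) : ℕ → ℕ → ℝ := fun j a => if j = 0 then 1 else if a = 0 then γ j else 1

lemma age_eq_zero_iff {s : Finset ℕ} {j : ℕ} (hj : j ≠ 0) : age s j = 0 ↔ j ∈ s := by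
  constructor
  · intro h
    by_contra hns
    exact age_pos_of_not_mem hj hns h
  · exact age_of_mem

lemma range_succ_eq_insert_Ioc (n : ℕ) : Finset.range (n+1) = insert 0 (Finset.Ioc 0 n) := by
  apply Finset.ext
  intro j
  simp only [Finset.mem_range, Finset.mem_insert, Finset.mem_Ioc]
  omega

lemma prod_hhF (γ : ℕ → ℝ) (n : ℕ) (s : Finset ℕ) (hs : s ⊆ Finset.Ioc 0 n) :
    ∏ j ∈ Finset.range (n+1), hhF γ j (age s j) = ∏ j ∈ s, γ j := by
  rw [range_succ_eq_insert_Ioc, Finset.prod_insert (by simp)]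
  have h0 : hhF γ 0 (age s 0) = 1 := by unfold hhF; rw [if_pos rfl]
  rw [h0, one_mul]
  have hcong : ∀ j ∈ Finset.Ioc 0 n, hhF γ j (age s j) = if j ∈ s then γ j else 1 := by
    intro j hj
    have hj0 : j ≠ 0 := by
      have := (Finset.mem_Ioc.1 hj).1
      omega
    unfold hhF
    rw [if_neg hj0]
    by_cases hjs : j ∈ s
    · rw [if_pos ((age_eq_zero_iff hj0).2 hjs), if_pos hjs]
    · rw [if_neg (fun h => hjs ((age_eq_zero_iff hj0).1 h)), if_neg hjs]
  rw [Finset.prod_congr rfl hcong, Finset.prod_ite_mem,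
    Finset.inter_eq_right.2 hs]

/-- transfer: the expectation of the pattern product equals the combinatorial functional -/
lemma integral_eq_Sg (P : Measure Ω) [IsProbabilityMeasure P] (T : ℕ → Ω → ℕ∞)
    (hT1 : ∀ j ω, 1 ≤ T j ω) (hTmeas : ∀ j, Measurable (T j))
    (hTindep : iIndepFun T P)
    (hTident : ∀ j, Measure.map (T j) P = Measure.map (T 0) P)
    (q : ℕ → ℝ) (hq : ∀ i, 0 ≤ q i ∧ q i < 1)
    (hTq : ∀ n : ℕ, 1 ≤ n → P {ω | T 0 ω = (n : ℕ∞)} =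
      ENNReal.ofReal ((1 - q (n - 1)) * ∏ i ∈ Finset.range (n - 1), q i))
    (n : ℕ) (γ : ℕ → ℝ) :
    ∫ ω, ∏ j ∈ Finset.Ioc 0 n, γ j ^ (xi T j ω) ∂P = Sg q n (hhF γ) := by
  rw [integral_prod_xi P T hTmeas n γ]
  unfold Sg
  apply Finset.sum_congr rfl
  intro s hsp
  have hs := Finset.mem_powerset.1 hsp
  rw [P_Ev P T hT1 hTmeas hTindep hTident q hq hTq n s hs,
    ENNReal.toReal_ofReal (Wgt_nonneg (fun i => ⟨(hq i).1, le_of_lt (hq i).2⟩) n s),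
    prod_hhF γ n s hs]

/-- the individual expectation -/
lemma integral_pow_xi (P : Measure Ω) [IsProbabilityMeasure P] (T : ℕ → Ω → ℕ∞)
    (hTmeas : ∀ j, Measurable (T j)) (β : ℝ) (i : ℕ) :
    ∫ ω, β ^ (xi T i ω) ∂P = 1 - (P {ω | xi T i ω = 1}).toReal * (1 - β) := by
  have hfun : ∀ ω, β ^ (xi T i ω)
      = 1 + Set.indicator {ω : Ω | xi T i ω = 1} (fun _ => β - 1) ω := by
    intro ω
    rcases xi_cases T i ω with h | h
    · rw [h, pow_zero, Set.indicator_of_notMem (by simp [h]), add_zero]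
    · have hmem : ω ∈ {ω : Ω | xi T i ω = 1} := h
      rw [Set.indicator_of_mem hmem, h, pow_one]
      ring
  calc ∫ ω, β ^ (xi T i ω) ∂P
      = ∫ ω, (1 + Set.indicator {ω : Ω | xi T i ω = 1} (fun _ => β - 1) ω) ∂P := by
        apply integral_congr_ae
        exact Filter.Eventually.of_forall hfun
    _ = (∫ _, (1:ℝ) ∂P) + ∫ ω, Set.indicator {ω : Ω | xi T i ω = 1} (fun _ => β - 1) ω ∂P := by
        apply integral_add (integrable_const _)
        exact (integrable_const _).indicator (measurableSet_xi_one hTmeas i)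
    _ = 1 - (P {ω | xi T i ω = 1}).toReal * (1 - β) := by
        rw [integral_const, integral_indicator_const _ (measurableSet_xi_one hTmeas i),
          smul_eq_mul, smul_eq_mul, probReal_univ, measureReal_def]
        ring

end Integral


/-- **FKG inequality for monotone renewal.** If the parameters
`(q_i)` are nondecreasing and `α_i ∈ [0,1]`, then for every `n ≥ 1`,
`E[∏_{i=0}^{n-1} α_i^{ξ_{i+1}}] ≥ ∏_{i=0}^{n-1} E[α_i^{ξ_{i+1}}]
  = ∏_{i=0}^{n-1} (1 - P(ξ_{i+1}=1)(1 - α_i))`. -/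
theorem fkg_monotone_renewal
    {Ω : Type*} [MeasurableSpace Ω]
    (P : Measure Ω) [IsProbabilityMeasure P]
    (T : ℕ → Ω → ℕ∞)
    -- the inter-arrival times take values in {1,2,…} ∪ {∞}
    (hT1 : ∀ j ω, 1 ≤ T j ω)
    (hTmeas : ∀ j, Measurable (T j))
    -- the inter-arrival times are i.i.d.
    (hTindep : iIndepFun T P)
    (hTident : ∀ j, Measure.map (T j) P = Measure.map (T 0) P)
    -- the inter-arrival law is parametrized by q : P(T = n) = (1 - q_{n-1}) ∏_{i<n-1} q_i
    (q : ℕ → ℝ) (hq : ∀ i, 0 ≤ q i ∧ q i < 1)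
    (hTq : ∀ n : ℕ, 1 ≤ n →
      P {ω | T 0 ω = (n : ℕ∞)} =
        ENNReal.ofReal ((1 - q (n - 1)) * ∏ i ∈ Finset.range (n - 1), q i))
    (hqmono : Monotone q)
    (α : ℕ → ℝ) (hα0 : ∀ n, 0 ≤ α n) (hα1 : ∀ n, α n ≤ 1)
    (n : ℕ) (hn : 1 ≤ n) :
    (∏ i ∈ Finset.range n, ∫ ω, α i ^ (xi T (i + 1) ω) ∂P ≤
      ∫ ω, ∏ i ∈ Finset.range n, α i ^ (xi T (i + 1) ω) ∂P) ∧
    (∀ i, ∫ ω, α i ^ (xi T (i + 1) ω) ∂P = 1 - pxi P T (i + 1) * (1 - α i)) := by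
  constructor
  · have hq1 : ∀ i, 0 ≤ q i ∧ q i ≤ 1 := fun i => ⟨(hq i).1, le_of_lt (hq i).2⟩
    set γ : ℕ → ℝ := fun j => α (j-1) with hγ
    -- pointwise reindexing
    have hpt : ∀ ω, ∏ i ∈ Finset.range n, α i ^ (xi T (i+1) ω)
        = ∏ j ∈ Finset.Ioc 0 n, γ j ^ (xi T j ω) := by
      intro ω
      apply Finset.prod_nbij' (fun i => i+1) (fun j => j-1)
      · intro a ha
        simp only [Finset.mem_range] at ha
        simp only [Finset.mem_Ioc]
        omega
      · intro a ha
        simp only [Finset.mem_Ioc] at ha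
        simp only [Finset.mem_range]
        omega
      · intro a _
        omega
      · intro a ha
        simp only [Finset.mem_Ioc] at ha
        omega
      · intro a _
        rfl
    have hmain : ∫ ω, ∏ i ∈ Finset.range n, α i ^ (xi T (i+1) ω) ∂P = Sg q n (hhF γ) := by
      calc ∫ ω, ∏ i ∈ Finset.range n, α i ^ (xi T (i+1) ω) ∂P
          = ∫ ω, ∏ j ∈ Finset.Ioc 0 n, γ j ^ (xi T j ω) ∂P :=
            integral_congr_ae (Filter.Eventually.of_forall hpt)
        _ = Sg q n (hhF γ) := integral_eq_Sg P T hT1 hTmeas hTindep hTident q hq hTq n γ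
    have hfac : ∀ i, i < n → ∫ ω, α i ^ (xi T (i+1) ω) ∂P
        = Sg q n (hhF (fun m => if m = i+1 then α i else 1)) := by
      intro i hi
      have hpt2 : ∀ ω, α i ^ (xi T (i+1) ω)
          = ∏ j ∈ Finset.Ioc 0 n, (if j = i+1 then α i else 1) ^ (xi T j ω) := by
        intro ω
        rw [Finset.prod_eq_single_of_mem (i+1) (Finset.mem_Ioc.2 ⟨by omega, by omega⟩)]
        · rw [if_pos rfl]
        · intro b _ hne
          rw [if_neg hne, one_pow]
      calc ∫ ω, α i ^ (xi T (i+1) ω) ∂P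
          = ∫ ω, ∏ j ∈ Finset.Ioc 0 n, (if j = i+1 then α i else 1) ^ (xi T j ω) ∂P :=
            integral_congr_ae (Filter.Eventually.of_forall hpt2)
        _ = Sg q n (hhF (fun m => if m = i+1 then α i else 1)) :=
            integral_eq_Sg P T hT1 hTmeas hTindep hTident q hq hTq n _
    have hupd : ∀ i, hhF (fun m => if m = i+1 then α i else 1)
        = updF (fun _ _ => 1) (i+1) (hhF γ (i+1)) := by
      intro i
      funext m a
      by_cases hm : m = i+1
      · by_cases ha : a = 0
        · simp [hhF, updF, hm, ha, hγ]
        · simp [hhF, updF, hm, ha, hγ]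
      · by_cases hm0 : m = 0
        · simp [hhF, updF, hm0, (by omega : (0:ℕ) ≠ i+1)]
        · simp [hhF, updF, hm0, hm, ite_self]
    have hprodfac : ∏ i ∈ Finset.range n, ∫ ω, α i ^ (xi T (i+1) ω) ∂P
        = ∏ j ∈ Finset.Ioc 0 n, Sg q n (updF (fun _ _ => 1) j (hhF γ j)) := by
      rw [Finset.prod_congr rfl (fun i hi => by
        rw [hfac i (Finset.mem_range.1 hi), hupd i])]
      apply Finset.prod_nbij' (fun i => i+1) (fun j => j-1)
      · intro a ha
        simp only [Finset.mem_range] at ha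
        simp only [Finset.mem_Ioc]
        omega
      · intro a ha
        simp only [Finset.mem_Ioc] at ha
        simp only [Finset.mem_range]
        omega
      · intro a _
        omega
      · intro a ha
        simp only [Finset.mem_Ioc] at ha
        omega
      · intro a _
        rfl
    have hM01 : ∀ j, M01 (hhF γ j) := by
      intro j
      by_cases hj : j = 0
      · have he : hhF γ j = fun _ => 1 := by
          funext a
          unfold hhF
          rw [if_pos hj]
        rw [he]
        exact M01_one
      · constructor
        · intro a b hab
          show hhF γ j a ≤ hhF γ j b
          unfold hhF
          rw [if_neg hj, if_neg hj]
          by_cases ha : a = 0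
          · by_cases hb : b = 0
            · rw [if_pos ha, if_pos hb]
            · rw [if_pos ha, if_neg hb]
              exact hα1 _
          · have hb : b ≠ 0 := by omega
            rw [if_neg ha, if_neg hb]
        · intro a
          unfold hhF
          rw [if_neg hj]
          by_cases ha : a = 0
          · rw [if_pos ha]
            exact ⟨hα0 _, hα1 _⟩
          · rw [if_neg ha]
            exact ⟨zero_le_one, le_rfl⟩
    have h0' : hhF γ 0 = fun _ => 1 := by
      funext a
      unfold hhF
      rw [if_pos rfl]
    calc ∏ i ∈ Finset.range n, ∫ ω, α i ^ (xi T (i+1) ω) ∂P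
        = ∏ j ∈ Finset.Ioc 0 n, Sg q n (updF (fun _ _ => 1) j (hhF γ j)) := hprodfac
      _ ≤ Sg q n (hhF γ) := Sg_split hq1 hqmono n (hhF γ) hM01 h0'
      _ = ∫ ω, ∏ i ∈ Finset.range n, α i ^ (xi T (i+1) ω) ∂P := hmain.symm
  · intro i
    rw [integral_pow_xi P T hTmeas (α i) (i+1)]
    rfl


end RenewalPerc
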